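/- In G_{r,n} with r ≥ 2, for n+1 ≤ k ≤ n(r-1), the number of elements whose excedance word is b^k a^{rn-1-k} equals n!. -/

import Mathlib

/-- Entry of the excedance matrix of the colored permutation `π = (z, τ) ∈ G_{r,n}`
at letter `i` with color `j` (`0 ≤ j ≤ r-1`): it is `b` (encoded `True`) iff
`π(i^{[j]}) > i^{[j]}` in the color order
`1^{[r-1]} < ⋯ < n^{[r-1]} < ⋯ < 1^{[0]} < ⋯ < n^{[0]}`.
Here `π(i^{[j]}) = τ(i)^{[(z_{τ(i)} + j) mod r]}`, and a letter with a strictly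
smaller color, or the same color and a larger index, is larger. -/
def excB (r n : ℕ) (z : Fin n → Fin r) (τ : Equiv.Perm (Fin n)) (i : Fin n) (j : ℕ) :
    Prop :=
  ((z (τ i) : ℕ) + j) % r < j ∨
    (((z (τ i) : ℕ) + j) % r = j ∧ (i : ℕ) < (τ i : ℕ))

/-- `π = (z, τ)` has excedance word `b^k a^{rn-1-k}`: reading the excedance matrix
row by row from color `r-1` down to color `0` (the entry `(i,j)` sits at position
`(r-1-j)·n + i`, 0-based) and dropping the last entry, the first `k` entries are `b`
and the rest are `a`. -/
def hasWordBA (r n k : ℕ) (z : Fin n → Fin r) (τ : Equiv.Perm (Fin n)) : Prop :=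
  ∀ (i : Fin n) (j : Fin r), (r - 1 - (j : ℕ)) * n + (i : ℕ) < r * n - 1 →
    (excB r n z τ i (j : ℕ) ↔ (r - 1 - (j : ℕ)) * n + (i : ℕ) < k)

/-- `[b^k a^{rn-1-k}]`: the number of colored permutations in `G_{r,n}` whose
excedance word is `b^k a^{rn-1-k}`. -/
noncomputable def cntBA (r n k : ℕ) : ℕ :=
  Nat.card {π : (Fin n → Fin r) × Equiv.Perm (Fin n) // hasWordBA r n k π.1 π.2}

/-- `c_i(π) = z_i(π⁻¹)`: the color attached to `i` by the inverse of `π = (z, τ)`,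
namely `(- z_{τ(i)}) mod r`. -/
def cVal (r n : ℕ) (z : Fin n → Fin r) (τ : Equiv.Perm (Fin n)) (i : Fin n) : ℕ :=
  (r - (z (τ i) : ℕ)) % r

lemma excB_iff (r n : ℕ) (z : Fin n → Fin r) (τ : Equiv.Perm (Fin n)) (i : Fin n)
    (j : ℕ) (hj : j < r) :
    excB r n z τ i j ↔
      (1 ≤ (z (τ i) : ℕ) ∧ r ≤ (z (τ i) : ℕ) + j) ∨
        ((z (τ i) : ℕ) = 0 ∧ (i : ℕ) < (τ i : ℕ)) := by
  have hc : (z (τ i) : ℕ) < r := (z (τ i)).2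
  unfold excB
  by_cases h : (z (τ i) : ℕ) + j < r
  · rw [Nat.mod_eq_of_lt h]; omega
  · have h2 : ((z (τ i) : ℕ) + j) % r = (z (τ i) : ℕ) + j - r := by
      rw [Nat.mod_eq_sub_mod (by omega), Nat.mod_eq_of_lt (by omega)]
    rw [h2]; omega

lemma pos_lt_iff (n b q s i : ℕ) (hi : i < n) (hs : s < n) :
    b * n + i < q * n + s ↔ b < q ∨ (b = q ∧ i < s) := by
  constructor
  · intro h
    rcases lt_trichotomy b q with h1 | h1 | h1
    · exact Or.inl h1
    · subst h1; exact Or.inr ⟨rfl, by omega⟩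
    · exfalso
      have h2 : (q + 1) * n ≤ b * n := Nat.mul_le_mul_right n (by omega)
      rw [Nat.add_mul, Nat.one_mul] at h2
      omega
  · rintro (h | ⟨rfl, h⟩)
    · have h2 : (b + 1) * n ≤ q * n := Nat.mul_le_mul_right n (by omega)
      rw [Nat.add_mul, Nat.one_mul] at h2
      omega
    · omega

lemma key (r n k : ℕ) (hr : 2 ≤ r) (hn : 0 < n)
    (hk1 : n + 1 ≤ k) (hk2 : k ≤ n * (r - 1))
    (z : Fin n → Fin r) (τ : Equiv.Perm (Fin n)) :
    hasWordBA r n k z τ ↔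
      ∀ i : Fin n, (z (τ i) : ℕ) = k / n + (if (i : ℕ) < k % n then 1 else 0) := by
  have hqs : (k / n) * n + k % n = k := by rw [Nat.mul_comm, Nat.div_add_mod]
  set q := k / n with hq
  set s := k % n with hs0
  have hs : s < n := Nat.mod_lt _ hn
  have hq1 : 1 ≤ q := by
    rcases Nat.eq_zero_or_pos q with h | h
    · rw [h] at hqs; omega
    · exact h
  have hqr : q ≤ r - 1 := by
    have h : k / n ≤ n * (r - 1) / n := Nat.div_le_div_right hk2
    rwa [Nat.mul_div_cancel_left _ hn] at h
  have hsr : 0 < s → q + 1 ≤ r - 1 := by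
    intro h
    have h2 : q * n < (r - 1) * n := by rw [Nat.mul_comm (r-1) n]; omega
    have h3 := Nat.lt_of_mul_lt_mul_right h2
    omega
  -- product facts
  have m1 : ∀ a : ℕ, (a + 1) * n = a * n + n := fun a => by rw [Nat.add_mul, Nat.one_mul]
  have m2 : (q - 1) * n + n = q * n := by rw [← m1 (q-1)]; congr 1; omega
  have m3 : (r - 1) * n + n = r * n := by rw [← m1 (r-1)]; congr 1; omega
  have m4 : (r - 2) * n + n = (r - 1) * n := by rw [← m1 (r-2)]; congr 1; omega
  have m5 : q * n ≤ (r - 1) * n := Nat.mul_le_mul_right n hqr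
  have m6 : (q - 1) * n ≤ (r - 2) * n := Nat.mul_le_mul_right n (by omega)
  have m7 : 0 < s → (q + 1) * n ≤ (r - 1) * n := fun h => Nat.mul_le_mul_right n (hsr h)
  constructor
  · intro H i
    have hc : (z (τ i) : ℕ) < r := (z (τ i)).2
    have ht : (τ i : ℕ) < n := (τ i).2
    have hi2 : (i : ℕ) < n := i.2
    have G : ∀ jv : ℕ, jv < r → (r - 1 - jv) * n + (i : ℕ) < r * n - 1 →
        (((1 ≤ (z (τ i) : ℕ) ∧ r ≤ (z (τ i) : ℕ) + jv) ∨
          ((z (τ i) : ℕ) = 0 ∧ (i : ℕ) < (τ i : ℕ))) ↔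
          (r - 1 - jv) * n + (i : ℕ) < k) := by
      intro jv hjv hp
      rw [← excB_iff r n z τ i jv hjv]
      exact H i ⟨jv, hjv⟩ hp
    by_cases hi : (i : ℕ) < s
    · -- color must be q+1
      rw [if_pos hi]
      have hq2 : q + 1 ≤ r - 1 := hsr (by omega)
      have e1 : r - 1 - (r - 1 - q) = q := by omega
      have e2 : r - 1 - (r - 2 - q) = q + 1 := by omega
      have hb := G (r - 1 - q) (by omega) (by rw [e1]; omega)
      rw [e1] at hb
      have m7' : q * n + n ≤ (r - 1) * n := by
        have := m7 (by omega); rw [m1 q] at this; exact this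
      have ha := G (r - 2 - q) (by omega) (by rw [e2, m1 q]; omega)
      rw [e2, m1 q] at ha
      omega
    · rw [if_neg hi]
      have e1 : r - 1 - (r - q) = q - 1 := by omega
      have hb := G (r - q) (by omega) (by rw [e1]; omega)
      rw [e1] at hb
      by_cases hcase : q * n + (i : ℕ) < r * n - 1
      · have e2 : r - 1 - (r - 1 - q) = q := by omega
        have ha := G (r - 1 - q) (by omega) (by rw [e2]; omega)
        rw [e2] at ha
        omega
      · -- q = r-1, i = n-1, s = 0
        have hqe : q * n = (r - 1) * n := by omega
        have hie : (i : ℕ) = n - 1 := by omega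
        have hqr1 : q = r - 1 := Nat.eq_of_mul_eq_mul_right hn hqe
        have hse : s = 0 := by
          have : k ≤ (r - 1) * n := by rw [Nat.mul_comm]; exact hk2
          omega
        have e3 : r - 1 - 1 = r - 2 := by omega
        have hb2 := G 1 (by omega) (by rw [e3]; omega)
        rw [e3] at hb2
        omega
  · intro hF i j hpos
    have hci := hF i
    have hi2 : (i : ℕ) < n := i.2
    rw [excB_iff r n z τ i (j : ℕ) j.2, ← hqs,
      pos_lt_iff n (r - 1 - (j : ℕ)) q s (i : ℕ) hi2 hs]
    have hj : (j : ℕ) < r := j.2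
    by_cases hi : (i : ℕ) < s
    · rw [if_pos hi] at hci; omega
    · rw [if_neg hi] at hci; omega

/-- In `G_{r,n}` with `r ≥ 2`, for `n+1 ≤ k ≤ n(r-1)`,
`[b^k a^{rn-1-k}] = n!`. -/
theorem stmt5 (r n k : ℕ) (hr : 2 ≤ r) (hn : 0 < n)
    (hk1 : n + 1 ≤ k) (hk2 : k ≤ n * (r - 1)) :
    cntBA r n k = Nat.factorial n := by
  classical
  have hqs : (k / n) * n + k % n = k := by rw [Nat.mul_comm, Nat.div_add_mod]
  have hs : k % n < n := Nat.mod_lt _ hn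
  have hqr : k / n ≤ r - 1 := by
    have h : k / n ≤ n * (r - 1) / n := Nat.div_le_div_right hk2
    rwa [Nat.mul_div_cancel_left _ hn] at h
  have hsr : 0 < k % n → k / n + 1 ≤ r - 1 := by
    intro h
    have h2 : (k / n) * n < (r - 1) * n := by rw [Nat.mul_comm (r-1) n]; omega
    have h3 := Nat.lt_of_mul_lt_mul_right h2
    omega
  have hFlt : ∀ i : Fin n, k / n + (if (i : ℕ) < k % n then 1 else 0) < r := by
    intro i
    by_cases hi : (i : ℕ) < k % n
    · rw [if_pos hi]; have := hsr (by omega); omega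
    · rw [if_neg hi]; omega
  let F : Fin n → Fin r := fun i => ⟨k / n + (if (i : ℕ) < k % n then 1 else 0), hFlt i⟩
  have hFval : ∀ i : Fin n, (F i : ℕ) = k / n + (if (i : ℕ) < k % n then 1 else 0) :=
    fun i => rfl
  have hchar : ∀ (z : Fin n → Fin r) (τ : Equiv.Perm (Fin n)),
      hasWordBA r n k z τ ↔ z = fun m => F (τ.symm m) := by
    intro z τ
    rw [key r n k hr hn hk1 hk2 z τ]
    constructor
    · intro h
      funext m
      have h2 := h (τ.symm m)
      rw [Equiv.apply_symm_apply] at h2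
      exact Fin.ext (by rw [h2, hFval])
    · intro h i
      rw [h]
      simp only [Equiv.symm_apply_apply, hFval]
  have e : {π : (Fin n → Fin r) × Equiv.Perm (Fin n) // hasWordBA r n k π.1 π.2} ≃
      Equiv.Perm (Fin n) :=
    { toFun := fun p => p.1.2
      invFun := fun τ => ⟨(fun m => F (τ.symm m), τ), (hchar _ τ).mpr rfl⟩
      left_inv := fun p => by
        obtain ⟨⟨z, τ⟩, hp⟩ := p
        have := (hchar z τ).mp hp
        simp only [Subtype.mk.injEq, Prod.mk.injEq]
        exact ⟨this.symm, trivial⟩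
      right_inv := fun τ => rfl }
  rw [cntBA, Nat.card_congr e, Nat.card_eq_fintype_card, Fintype.card_perm, Fintype.card_fin]
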